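/- Consider the map (ξ, η, χ) ↦ (x, y, φ) given by x = (η−ξ)cos(π(1+3ξ/2))/((2/3+ξ)(2/3+η)) − (π/2)sin(π(1+3ξ/2)) + cos(π(1+3ξ/2) + (2/3+η)(t − 5π/2 − χ))/(2/3+η) − 1/(2/3+ξ), y = (η−ξ)sin(π(1+3ξ/2))/((2/3+ξ)(2/3+η)) + (π/2)cos(π(1+3ξ/2)) + sin(π(1+3ξ/2) + (2/3+η)(t − 5π/2 − χ))/(2/3+η) + π/2 + χ, φ = (3π/2)(1+ξ) + (2/3+η)(t − 5π/2 − χ). At (ξ, η, χ) = (0, 0, 0) and t = 4π, the Jacobian determinant ∂(x,y,φ)/∂(ξ,η,χ) equals −27π/2 − 9π³/8, which is nonzero. -/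

import Mathlib

/-- Endpoint map at time `t = 4π` of the Dubins trajectory with control `u = 0` on
`[0, π/2+χ)`, `u = 2/3+ξ` on `[π/2+χ, 2π+χ)`, `u = 0` on `[2π+χ, 5π/2+χ)` and
`u = 2/3+η` afterwards, as a function of the parameters `(ξ, η, χ)`. -/
noncomputable def lemEndpointMap (p : ℝ × ℝ × ℝ) : ℝ × ℝ × ℝ :=
  let ξ := p.1
  let η := p.2.1
  let χ := p.2.2
  let t := 4 * Real.pi
  ((η - ξ) * Real.cos (Real.pi * (1 + 3 * ξ / 2)) / ((2 / 3 + ξ) * (2 / 3 + η))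
     - Real.pi / 2 * Real.sin (Real.pi * (1 + 3 * ξ / 2))
     + Real.cos (Real.pi * (1 + 3 * ξ / 2)
         + (2 / 3 + η) * (t - 5 * Real.pi / 2 - χ)) / (2 / 3 + η)
     - 1 / (2 / 3 + ξ),
   (η - ξ) * Real.sin (Real.pi * (1 + 3 * ξ / 2)) / ((2 / 3 + ξ) * (2 / 3 + η))
     + Real.pi / 2 * Real.cos (Real.pi * (1 + 3 * ξ / 2))
     + Real.sin (Real.pi * (1 + 3 * ξ / 2)
         + (2 / 3 + η) * (t - 5 * Real.pi / 2 - χ)) / (2 / 3 + η)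
     + Real.pi / 2 + χ,
   3 * Real.pi / 2 * (1 + ξ) + (2 / 3 + η) * (t - 5 * Real.pi / 2 - χ))

open ContinuousLinearMap Real

lemma divAux {E : Type*} [NormedAddCommGroup E] [NormedSpace ℝ E] {f g : E → ℝ}
    {f' g' : E →L[ℝ] ℝ} {x : E}
    (hf : HasFDerivAt f f' x) (hg : HasFDerivAt g g' x) (h : g x ≠ 0) :
    HasFDerivAt (fun p => f p / g p) (f x • ((-(g x ^ 2)⁻¹) • g') + (g x)⁻¹ • f') x := by
  simp only [div_eq_mul_inv]
  exact hf.mul ((hasDerivAt_inv h).comp_hasFDerivAt x hg)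

noncomputable def eL3 : (ℝ × ℝ × ℝ) ≃ₗ[ℝ] (Fin 3 → ℝ) where
  toFun p := ![p.1, p.2.1, p.2.2]
  invFun v := (v 0, v 1, v 2)
  map_add' p q := by funext i; fin_cases i <;> simp
  map_smul' c p := by funext i; fin_cases i <;> simp
  left_inv p := rfl
  right_inv v := by funext i; fin_cases i <;> simp [Fin.isValue]

noncomputable def row3 (a b c : ℝ) : (ℝ × ℝ × ℝ) →L[ℝ] ℝ :=
  a • (ContinuousLinearMap.fst ℝ ℝ (ℝ × ℝ)) +
  b • ((ContinuousLinearMap.fst ℝ ℝ ℝ).comp (ContinuousLinearMap.snd ℝ ℝ (ℝ × ℝ))) +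
  c • ((ContinuousLinearMap.snd ℝ ℝ ℝ).comp (ContinuousLinearMap.snd ℝ ℝ (ℝ × ℝ)))

@[simp] lemma row3_apply (a b c : ℝ) (p : ℝ × ℝ × ℝ) :
    row3 a b c p = a * p.1 + b * p.2.1 + c * p.2.2 := by
  simp [row3]

noncomputable def Ljac : (ℝ × ℝ × ℝ) →L[ℝ] (ℝ × ℝ × ℝ) :=
  (row3 (9/2 + 3*Real.pi^2/4) (-(9/2)) 0).prod
    ((row3 (9*Real.pi/4) (9*Real.pi/4) 0).prod
      (row3 (3*Real.pi/2) (3*Real.pi/2) (-(2/3))))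

lemma eL3_apply (p : ℝ × ℝ × ℝ) : eL3 p = ![p.1, p.2.1, p.2.2] := rfl

lemma eL3_symm_apply (v : Fin 3 → ℝ) : eL3.symm v = (v 0, v 1, v 2) := rfl

lemma Ljac_det : Ljac.det = -(27 * Real.pi / 2) - 9 * Real.pi ^ 3 / 8 := by
  have : Ljac.det = Matrix.det (LinearMap.toMatrix (Module.Basis.ofEquivFun eL3)
      (Module.Basis.ofEquivFun eL3) (Ljac : (ℝ×ℝ×ℝ) →ₗ[ℝ] (ℝ×ℝ×ℝ))) := by
    rw [LinearMap.det_toMatrix]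
  rw [this, Matrix.det_fin_three]
  simp [LinearMap.toMatrix_apply, Module.Basis.ofEquivFun_repr_apply, Module.Basis.coe_ofEquivFun,
    Ljac, eL3_apply, eL3_symm_apply, Pi.single_apply]
  ring



set_option maxHeartbeats 2000000 in
lemma lemEndpointMap_hasFDerivAt :
    HasFDerivAt lemEndpointMap Ljac ((0:ℝ),(0:ℝ),(0:ℝ)) := by
  have hξ : HasFDerivAt (fun p : ℝ×ℝ×ℝ => p.1) (fst ℝ ℝ (ℝ×ℝ)) ((0:ℝ),(0:ℝ),(0:ℝ)) :=
    hasFDerivAt_fst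
  have hη : HasFDerivAt (fun p : ℝ×ℝ×ℝ => p.2.1) ((fst ℝ ℝ ℝ).comp (snd ℝ ℝ (ℝ×ℝ)))
      ((0:ℝ),(0:ℝ),(0:ℝ)) := hasFDerivAt_snd.fst
  have hχ : HasFDerivAt (fun p : ℝ×ℝ×ℝ => p.2.2) ((snd ℝ ℝ ℝ).comp (snd ℝ ℝ (ℝ×ℝ)))
      ((0:ℝ),(0:ℝ),(0:ℝ)) := hasFDerivAt_snd.snd
  have ha := ((divAux (hξ.const_mul (3:ℝ)) (hasFDerivAt_const (2:ℝ) _)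
    (by norm_num)).const_add (1:ℝ)).const_mul Real.pi
  have hcosa := (Real.hasDerivAt_cos _).comp_hasFDerivAt ((0:ℝ),(0:ℝ),(0:ℝ)) ha
  have hsina := (Real.hasDerivAt_sin _).comp_hasFDerivAt ((0:ℝ),(0:ℝ),(0:ℝ)) ha
  have hb := ha.add ((hη.const_add (2/3:ℝ)).mul
    ((hasFDerivAt_const (4 * Real.pi - 5 * Real.pi / 2) _).sub hχ))
  have hcosb := (Real.hasDerivAt_cos _).comp_hasFDerivAt ((0:ℝ),(0:ℝ),(0:ℝ)) hb
  have hsinb := (Real.hasDerivAt_sin _).comp_hasFDerivAt ((0:ℝ),(0:ℝ),(0:ℝ)) hb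
  -- first component
  have h1 := ((divAux ((hη.sub hξ).mul hcosa)
      ((hξ.const_add (2/3:ℝ)).mul (hη.const_add (2/3:ℝ))) (by norm_num)).sub
      (hsina.const_mul (Real.pi/2))).add
      (divAux hcosb (hη.const_add (2/3:ℝ)) (by norm_num)) |>.sub
      (divAux (hasFDerivAt_const (1:ℝ) _) (hξ.const_add (2/3:ℝ)) (by norm_num))
  -- second component
  have h2 := ((((divAux ((hη.sub hξ).mul hsina)
      ((hξ.const_add (2/3:ℝ)).mul (hη.const_add (2/3:ℝ))) (by norm_num)).add
      (hcosa.const_mul (Real.pi/2))).add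
      (divAux hsinb (hη.const_add (2/3:ℝ)) (by norm_num))).add_const
      (Real.pi/2)).add hχ
  -- third component
  have h3 := ((hξ.const_add (1:ℝ)).const_mul (3*Real.pi/2)).add
    ((hη.const_add (2/3:ℝ)).mul
      ((hasFDerivAt_const (4 * Real.pi - 5 * Real.pi / 2) _).sub hχ))
  have hF := h1.prodMk (h2.prodMk h3)
  have hc1 : Real.cos (Real.pi * (1 + 3 * (0:ℝ) / 2)) = -1 := by
    rw [show Real.pi * (1 + 3 * (0:ℝ) / 2) = Real.pi by ring, Real.cos_pi]
  have hs1 : Real.sin (Real.pi * (1 + 3 * (0:ℝ) / 2)) = 0 := by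
    rw [show Real.pi * (1 + 3 * (0:ℝ) / 2) = Real.pi by ring, Real.sin_pi]
  have hc2 : Real.cos (Real.pi * (1 + 3 * (0:ℝ) / 2)
      + (2/3 + (0:ℝ)) * (4 * Real.pi - 5 * Real.pi / 2 - 0)) = 1 := by
    rw [show Real.pi * (1 + 3 * (0:ℝ) / 2)
      + (2/3 + (0:ℝ)) * (4 * Real.pi - 5 * Real.pi / 2 - 0) = 2 * Real.pi by ring,
      Real.cos_two_pi]
  have hs2 : Real.sin (Real.pi * (1 + 3 * (0:ℝ) / 2)
      + (2/3 + (0:ℝ)) * (4 * Real.pi - 5 * Real.pi / 2 - 0)) = 0 := by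
    rw [show Real.pi * (1 + 3 * (0:ℝ) / 2)
      + (2/3 + (0:ℝ)) * (4 * Real.pi - 5 * Real.pi / 2 - 0) = 2 * Real.pi by ring,
      Real.sin_two_pi]
  have hc2' : Real.cos (Real.pi * 2) = 1 := by rw [mul_comm, Real.cos_two_pi]
  have hs2' : Real.sin (Real.pi * 2) = 0 := by rw [mul_comm, Real.sin_two_pi]
  refine hF.congr_fderiv (ContinuousLinearMap.ext fun p => ?_)
  simp [Ljac, Function.comp, hc1, hs1, hc2, hs2, Prod.ext_iff]
  ring_nf
  rw [hs2', hc2']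
  refine ⟨by ring, by ring, trivial⟩

theorem lemEndpointMap_jacobian :
    (fderiv ℝ lemEndpointMap (0, 0, 0)).det
      = -(27 * Real.pi / 2) - 9 * Real.pi ^ 3 / 8 ∧
    (fderiv ℝ lemEndpointMap (0, 0, 0)).det ≠ 0 := by
  have h := lemEndpointMap_hasFDerivAt.fderiv
  rw [h, Ljac_det]
  refine ⟨rfl, ?_⟩
  have hπ := Real.pi_pos
  nlinarith [pow_pos hπ 3]
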